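/- Every ε-free regular language is recognised by an L(/→)-grammar with types of degree at most 1, obtained by setting A/B ∈ f(a) iff A → aB is a production and A ∈ f(a) iff A → a is a production. -/

import Mathlib

/-- slash-only types over primitives `P`. `div β α` denotes `β/α`. -/
inductive Tp (P : Type) : Type
  | pr : P → Tp P
  | div : Tp P → Tp P → Tp P

open Tp

/-- The calculus L(/→) with Cut: Axiom, rule (/→), Cut. -/
inductive Der {P : Type} : List (Tp P) → Tp P → Prop
  | ax (α : Tp P) : Der [α] α
  | slash {Γ Δ Θ : List (Tp P)} {α β γ : Tp P} :
      Der Γ α → Der (Δ ++ β :: Θ) γ → Der (Δ ++ div β α :: (Γ ++ Θ)) γ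
  | cut {Γ Θ Δ : List (Tp P)} {α β : Tp P} :
      Der (Γ ++ α :: Θ) β → Der Δ α → Der (Γ ++ (Δ ++ Θ)) β

/-- Cut-free L(/→): only Axiom and (/→). -/
inductive DerCF {P : Type} : List (Tp P) → Tp P → Prop
  | ax (α : Tp P) : DerCF [α] α
  | slash {Γ Δ Θ : List (Tp P)} {α β γ : Tp P} :
      DerCF Γ α → DerCF (Δ ++ β :: Θ) γ → DerCF (Δ ++ div β α :: (Γ ++ Θ)) γ

/-- `mk δ [β₁, ..., βₙ] = (⋯((δ/βₙ)/βₙ₋₁)/⋯)/β₁`. -/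
def mk {P : Type} (δ : Tp P) : List (Tp P) → Tp P
  | [] => δ
  | b :: bs => div (mk δ bs) b

/-- Degree: number of occurrences of `/`. -/
def deg {P : Type} : Tp P → ℕ
  | pr _ => 0
  | div a b => deg a + deg b + 1

/-- A Lambek grammar over slash-only types: primitive types `P`, alphabet `V`,
distinguished primitive type `S`, finite type assignment `f`. -/
structure LGrammar (P V : Type) where
  S : P
  f : V → Set (Tp P)
  fin : ∀ a : V, (f a).Finite

/-- The language recognised by a Lambek grammar. -/
def LGrammar.Lang {P V : Type} (G : LGrammar P V) : Set (List V) :=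
  {w | ∃ Γ : List (Tp P), List.Forall₂ (fun a α => α ∈ G.f a) w Γ ∧ Der Γ (pr G.S)}

/-- A right-regular grammar: productions `A → aB` (`rule`) and `A → a` (`term`). -/
structure RegGrammar (N T : Type) where
  S : N
  rule : N → T → N → Prop
  term : N → T → Prop

/-- Generation relation of a right-regular grammar. -/
inductive RegGen {N T : Type} (G : RegGrammar N T) : N → List T → Prop
  | term {A : N} {a : T} : G.term A a → RegGen G A [a]
  | step {A B : N} {a : T} {w : List T} : G.rule A a B → RegGen G B w → RegGen G A (a :: w)

/-- The language generated by a right-regular grammar. -/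
def RegGrammar.Lang {N T : Type} (G : RegGrammar N T) : Set (List T) :=
  {w | RegGen G G.S w}



lemma forall2_split {A B : Type} {R : A → B → Prop} :
    ∀ {l₁ l₂ : List A} {l : List B}, List.Forall₂ R (l₁ ++ l₂) l →
    ∃ m₁ m₂, l = m₁ ++ m₂ ∧ List.Forall₂ R l₁ m₁ ∧ List.Forall₂ R l₂ m₂ := by
  intro l₁
  induction l₁ with
  | nil => intro l₂ l h; exact ⟨[], l, rfl, List.Forall₂.nil, h⟩
  | cons a t ih =>
    intro l₂ l h
    rcases h with _ | ⟨h1, h2⟩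
    rcases ih h2 with ⟨m₁, m₂, rfl, hm₁, hm₂⟩
    exact ⟨_ :: m₁, m₂, rfl, List.Forall₂.cons h1 hm₁, hm₂⟩

/-- Language interpretation of types. -/
def interp {N T : Type} (G : RegGrammar N T) : Tp N → Set (List T)
  | pr A => {w | RegGen G A w}
  | div b a => {x | ∀ y ∈ interp G a, x ++ y ∈ interp G b}

lemma sound {N T : Type} (G : RegGrammar N T) {Γ : List (Tp N)} {γ : Tp N}
    (h : Der Γ γ) : ∀ ws : List (List T),
    List.Forall₂ (fun α w => w ∈ interp G α) Γ ws → ws.flatten ∈ interp G γ := by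
  induction h with
  | ax α =>
    intro ws hws
    rcases hws with _ | ⟨h1, h2⟩
    cases h2
    simpa using h1
  | @slash Γ Δ Θ α β γ h1 h2 ih1 ih2 =>
    intro ws hws
    rcases forall2_split hws with ⟨wΔ, ws', rfl, hΔ, hrest⟩
    rcases hrest with _ | ⟨hx, hrest'⟩
    rename_i w ws''
    rcases forall2_split hrest' with ⟨wΓ, wΘ, rfl, hΓ, hΘ⟩
    have hβ : (w ++ wΓ.flatten) ∈ interp G β := hx _ (ih1 _ hΓ)
    have := ih2 (wΔ ++ (w ++ wΓ.flatten) :: wΘ)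
      (List.rel_append hΔ (List.Forall₂.cons hβ hΘ))
    simpa [List.flatten_append, List.append_assoc] using this
  | @cut Γ Θ Δ α β h1 h2 ih1 ih2 =>
    intro ws hws
    rcases forall2_split hws with ⟨wΓ, ws', rfl, hΓ, hrest⟩
    rcases forall2_split hrest with ⟨wΔ, wΘ, rfl, hΔ, hΘ⟩
    have hα : wΔ.flatten ∈ interp G α := ih2 _ hΔ
    have := ih1 (wΓ ++ wΔ.flatten :: wΘ)
      (List.rel_append hΓ (List.Forall₂.cons hα hΘ))
    simpa [List.flatten_append, List.append_assoc] using this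

/-- Every ε-free regular language is recognised by the L(/→)-grammar with degree-≤1 types
obtained by setting `A/B ∈ f a` iff `A → aB` and `A ∈ f a` iff `A → a`. -/
theorem regular_to_lambek {N T : Type} [Finite N] [Finite T] (G : RegGrammar N T)
    (LG : LGrammar N T) (hS : LG.S = G.S)
    (hf : ∀ a : T, LG.f a =
      {α | (∃ A B : N, G.rule A a B ∧ α = div (pr A) (pr B)) ∨
           (∃ A : N, G.term A a ∧ α = pr A)}) :
    LG.Lang = G.Lang := by
  ext w
  constructor
  · rintro ⟨Γ, hΓ, hd⟩
    have key : ∀ (u : List T) (Δ : List (Tp N)),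
        List.Forall₂ (fun a α => α ∈ LG.f a) u Δ →
        List.Forall₂ (fun α v => v ∈ interp G α) Δ (u.map (fun a => [a])) := by
      intro u Δ h
      induction h with
      | nil => exact List.Forall₂.nil
      | @cons a α u' Δ' ha _ ih =>
        refine List.Forall₂.cons ?_ ih
        rw [hf a] at ha
        rcases ha with ⟨A, B, hr, rfl⟩ | ⟨A, ht, rfl⟩
        · intro y hy
          exact RegGen.step hr hy
        · exact RegGen.term ht
    have := sound G hd (w.map (fun a => [a])) (key w Γ hΓ)
    have hjoin : ∀ u : List T, (u.map (fun a => [a])).flatten = u := by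
      intro u; induction u with
      | nil => rfl
      | cons a t ih => simp [ih]
    rw [hjoin] at this
    rw [hS] at this
    exact this
  · intro hw
    have key : ∀ (A : N) (u : List T), RegGen G A u →
        ∃ Γ : List (Tp N), List.Forall₂ (fun a α => α ∈ LG.f a) u Γ ∧ Der Γ (pr A) := by
      intro A u h
      induction h with
      | @term A a ht =>
        refine ⟨[pr A], List.Forall₂.cons ?_ List.Forall₂.nil, Der.ax _⟩
        rw [hf a]; exact Or.inr ⟨A, ht, rfl⟩
      | @step A B a u' hr _ ih =>
        rcases ih with ⟨Γ, hΓ, hd⟩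
        refine ⟨div (pr A) (pr B) :: Γ, List.Forall₂.cons ?_ hΓ, ?_⟩
        · rw [hf a]; exact Or.inl ⟨A, B, hr, rfl⟩
        · have := Der.slash (Δ := []) (Θ := []) hd (Der.ax (pr A))
          simpa using this
    rcases key G.S w hw with ⟨Γ, hΓ, hd⟩
    exact ⟨Γ, hΓ, hS ▸ hd⟩
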